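/- Let (ν_n) be a sequence of finite Borel measures on a Euclidean space E converging weakly to a finite Borel measure ν. Let (f_n) be a uniformly bounded sequence of Borel measurable functions and f a bounded continuous function such that for every compact set B ⊂ E, the essential supremum with respect to ν_n of |f_n − f| on B tends to 0 as n → ∞. Then ∫ f_n dν_n → ∫ f dν as n → ∞. -/

import Mathlib

open MeasureTheory Filter Topology

/-- If finite Borel measures `ν n` on a Euclidean space converge weakly to a finite
Borel measure `ν` (i.e. integrals of every bounded continuous function converge),
`(f n)` is a uniformly bounded sequence of Borel measurable functions, `f` is a
bounded continuous function, and for every compact `B` the `L^∞(ν n)`-norm of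
`1_B (f n − f)` tends to `0`, then `∫ f n dν n → ∫ f dν`. -/
theorem tendsto_integral_of_weak_conv_of_essSup
    (d : ℕ) (ν : ℕ → Measure (EuclideanSpace ℝ (Fin d)))
    (νlim : Measure (EuclideanSpace ℝ (Fin d)))
    [∀ n, IsFiniteMeasure (ν n)] [IsFiniteMeasure νlim]
    (hweak : ∀ g : BoundedContinuousFunction (EuclideanSpace ℝ (Fin d)) ℝ,
      Tendsto (fun n => ∫ x, g x ∂(ν n)) atTop (𝓝 (∫ x, g x ∂νlim)))
    (f : ℕ → EuclideanSpace ℝ (Fin d) → ℝ) (flim : EuclideanSpace ℝ (Fin d) → ℝ)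
    (hfmeas : ∀ n, Measurable (f n))
    (Mbd : ℝ) (hbd : ∀ n x, |f n x| ≤ Mbd)
    (hcont : Continuous flim) (Cbd : ℝ) (hflimbd : ∀ x, |flim x| ≤ Cbd)
    (hconv : ∀ B : Set (EuclideanSpace ℝ (Fin d)), IsCompact B →
      Tendsto (fun n =>
          essSup (fun x => |B.indicator (fun y => f n y - flim y) x|) (ν n))
        atTop (𝓝 0)) :
    Tendsto (fun n => ∫ x, f n x ∂(ν n)) atTop (𝓝 (∫ x, flim x ∂νlim)) := by
  -- nonnegativity of the bounds
  have hM0 : 0 ≤ Mbd := le_trans (abs_nonneg _) (hbd 0 0)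
  have hC0 : 0 ≤ Cbd := le_trans (abs_nonneg _) (hflimbd 0)
  -- integrability
  have hintlim : ∀ n, Integrable flim (ν n) := fun n =>
    ⟨hcont.measurable.aestronglyMeasurable,
      HasFiniteIntegral.of_bounded (C := Cbd) (ae_of_all _ fun x => by
        simpa [Real.norm_eq_abs] using hflimbd x)⟩
  have hintf : ∀ n, Integrable (f n) (ν n) := fun n =>
    ⟨(hfmeas n).aestronglyMeasurable,
      HasFiniteIntegral.of_bounded (C := Mbd) (ae_of_all _ fun x => by
        simpa [Real.norm_eq_abs] using hbd n x)⟩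
  -- `flim` as a bounded continuous function
  let flimB : BoundedContinuousFunction (EuclideanSpace ℝ (Fin d)) ℝ :=
    BoundedContinuousFunction.ofNormedAddCommGroup flim hcont Cbd
      (fun x => by simpa [Real.norm_eq_abs] using hflimbd x)
  have hflimB : Tendsto (fun n => ∫ x, flim x ∂(ν n)) atTop (𝓝 (∫ x, flim x ∂νlim)) := by
    exact hweak flimB
  -- reduce to showing the difference tends to zero
  have key : Tendsto (fun n => ∫ x, f n x ∂(ν n) - ∫ x, flim x ∂(ν n)) atTop (𝓝 0) := by
    -- total mass convergence
    have hmass : Tendsto (fun n => ((ν n) Set.univ).toReal) atTop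
        (𝓝 ((νlim Set.univ).toReal)) := by
      have := hweak (BoundedContinuousFunction.const (EuclideanSpace ℝ (Fin d)) (1 : ℝ))
      simpa [integral_const, Measure.real] using this
    -- finite measure versions for portmanteau
    let νF : ℕ → FiniteMeasure (EuclideanSpace ℝ (Fin d)) := fun n => ⟨ν n, inferInstance⟩
    let νlimF : FiniteMeasure (EuclideanSpace ℝ (Fin d)) := ⟨νlim, inferInstance⟩
    have hweakF : Tendsto νF atTop (𝓝 νlimF) :=
      FiniteMeasure.tendsto_iff_forall_integral_tendsto.mpr (fun g => hweak g)
    rw [NormedAddCommGroup.tendsto_nhds_zero]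
    intro ε hε
    set K : ℝ := (νlim Set.univ).toReal + 1 with hK
    have hKpos : 0 < K := by positivity
    set δ : ℝ := ε / (2 * K) with hδ
    have hδpos : 0 < δ := by positivity
    set η : ℝ := ε / (2 * (Mbd + Cbd + 1)) with hη
    have hηpos : 0 < η := by positivity
    -- choose a radius R with small limit mass outside the ball
    have htail : Tendsto (fun R : ℕ => νlim ((Metric.ball (0 : EuclideanSpace ℝ (Fin d)) R)ᶜ)) atTop (𝓝 0) := by
      have h1 : Tendsto (fun R : ℕ => νlim ((Metric.ball (0 : EuclideanSpace ℝ (Fin d)) R)ᶜ)) atTop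
          (𝓝 (νlim (⋂ R : ℕ, (Metric.ball (0 : EuclideanSpace ℝ (Fin d)) R)ᶜ))) := by
        refine tendsto_measure_iInter_atTop
          (fun R => Metric.isOpen_ball.measurableSet.compl.nullMeasurableSet)
          (fun i j hij => Set.compl_subset_compl.mpr
            (Metric.ball_subset_ball (by exact_mod_cast hij))) ⟨0, measure_ne_top _ _⟩
      have h2 : (⋂ R : ℕ, (Metric.ball (0 : EuclideanSpace ℝ (Fin d)) R)ᶜ) = ∅ := by
        ext x
        simp only [Set.mem_iInter, Set.mem_compl_iff, Metric.mem_ball, Set.mem_empty_iff_false,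
          iff_false, not_forall, not_not]
        obtain ⟨R, hR⟩ := exists_nat_gt (dist x (0 : EuclideanSpace ℝ (Fin d)))
        exact ⟨R, hR⟩
      rw [h2] at h1
      simpa using h1
    have h0η : (0 : ENNReal) < ENNReal.ofReal η := by simp [hηpos]
    obtain ⟨R, hR⟩ := (htail.eventually_lt_const h0η).exists
    set B : Set (EuclideanSpace ℝ (Fin d)) := Metric.closedBall (0 : EuclideanSpace ℝ (Fin d)) R with hBdef
    have hBcompact : IsCompact B := isCompact_closedBall _ _
    have hBmeas : MeasurableSet B := Metric.isClosed_closedBall.measurableSet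
    -- portmanteau: eventually the ν n-mass outside B is small
    have hF : IsClosed ((Metric.ball (0 : EuclideanSpace ℝ (Fin d)) R)ᶜ) := Metric.isOpen_ball.isClosed_compl
    have hport : atTop.limsup (fun n => (νF n : Measure (EuclideanSpace ℝ (Fin d))) ((Metric.ball (0 : EuclideanSpace ℝ (Fin d)) R)ᶜ))
        ≤ (νlimF : Measure (EuclideanSpace ℝ (Fin d))) ((Metric.ball (0 : EuclideanSpace ℝ (Fin d)) R)ᶜ) :=
      FiniteMeasure.limsup_measure_closed_le_of_tendsto hweakF hF
    have hev_tail : ∀ᶠ n in atTop, (ν n) Bᶜ < ENNReal.ofReal η := by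
      have : atTop.limsup (fun n => (ν n) ((Metric.ball (0 : EuclideanSpace ℝ (Fin d)) R)ᶜ)) < ENNReal.ofReal η :=
        lt_of_le_of_lt hport hR
      filter_upwards [eventually_lt_of_limsup_lt this] with n hn
      exact lt_of_le_of_lt (measure_mono (Set.compl_subset_compl.mpr Metric.ball_subset_closedBall)) hn
    -- eventually the essSup over B is small
    have hev_ess : ∀ᶠ n in atTop,
        essSup (fun x => |B.indicator (fun y => f n y - flim y) x|) (ν n) < δ :=
      (hconv B hBcompact).eventually_lt_const hδpos
    -- eventually the mass is bounded by K
    have hev_mass : ∀ᶠ n in atTop, ((ν n) Set.univ).toReal < K :=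
      hmass.eventually_lt_const (by simp [hK])
    filter_upwards [hev_tail, hev_ess, hev_mass] with n htail_n hess_n hmass_n
    -- a.e. bound on B
    have hae : ∀ᵐ x ∂(ν n), |B.indicator (fun y => f n y - flim y) x| < δ := by
      refine ae_lt_of_essSup_lt hess_n ⟨Mbd + Cbd, ?_⟩
      refine eventually_map.2 (ae_of_all _ fun x => ?_)
      by_cases hx : x ∈ B
      · rw [Set.indicator_of_mem hx]
        exact le_trans (abs_sub _ _) (add_le_add (hbd n x) (hflimbd x))
      · rw [Set.indicator_of_notMem hx]
        simpa using add_nonneg hM0 hC0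
    have haeB : ∀ᵐ x ∂(ν n), x ∈ B → |f n x - flim x| ≤ δ := by
      filter_upwards [hae] with x hx hxB
      rw [Set.indicator_of_mem hxB] at hx
      exact hx.le
    -- integrability of the absolute difference
    have hint_abs : Integrable (fun x => |f n x - flim x|) (ν n) :=
      ((hintf n).sub (hintlim n)).abs
    -- split the integral
    have hsplit : ∫ x, |f n x - flim x| ∂(ν n)
        = (∫ x in B, |f n x - flim x| ∂(ν n)) + ∫ x in Bᶜ, |f n x - flim x| ∂(ν n) :=
      (integral_add_compl hBmeas hint_abs).symm
    -- bound on B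
    have hB_bound : ∫ x in B, |f n x - flim x| ∂(ν n) ≤ δ * K := by
      calc ∫ x in B, |f n x - flim x| ∂(ν n)
          ≤ ∫ _x in B, δ ∂(ν n) :=
            setIntegral_mono_on_ae hint_abs.integrableOn integrableOn_const hBmeas haeB
        _ = ((ν n) B).toReal * δ := by simp [integral_const, Measure.real]
        _ ≤ K * δ := by
            refine mul_le_mul_of_nonneg_right ?_ hδpos.le
            exact le_trans (ENNReal.toReal_mono (measure_ne_top _ _) (measure_mono (Set.subset_univ _))) hmass_n.le
        _ = δ * K := mul_comm _ _
    -- bound on Bᶜ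
    have hBc_bound : ∫ x in Bᶜ, |f n x - flim x| ∂(ν n) ≤ (Mbd + Cbd) * η := by
      calc ∫ x in Bᶜ, |f n x - flim x| ∂(ν n)
          ≤ ∫ _x in Bᶜ, (Mbd + Cbd) ∂(ν n) := by
            refine setIntegral_mono_on hint_abs.integrableOn integrableOn_const hBmeas.compl (fun x _ => ?_)
            exact le_trans (abs_sub _ _) (add_le_add (hbd n x) (hflimbd x))
        _ = ((ν n) Bᶜ).toReal * (Mbd + Cbd) := by simp [integral_const, Measure.real]
        _ ≤ η * (Mbd + Cbd) := by
            refine mul_le_mul_of_nonneg_right ?_ (by positivity)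
            rw [← ENNReal.ofReal_le_ofReal_iff hηpos.le, ENNReal.ofReal_toReal (measure_ne_top _ _)]
            exact htail_n.le
        _ = (Mbd + Cbd) * η := mul_comm _ _
    -- put everything together
    have habs : ‖∫ x, f n x ∂(ν n) - ∫ x, flim x ∂(ν n)‖ ≤ ∫ x, |f n x - flim x| ∂(ν n) := by
      rw [← integral_sub (hintf n) (hintlim n)]
      simpa [Real.norm_eq_abs] using
        norm_integral_le_integral_norm (μ := ν n) (fun x => f n x - flim x)
    have h1 : (Mbd + Cbd) * η < ε / 2 := by
      have hq : (Mbd + Cbd) / (Mbd + Cbd + 1) < 1 :=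
        (div_lt_one (by positivity)).2 (by linarith)
      calc (Mbd + Cbd) * η = ε * ((Mbd + Cbd) / (Mbd + Cbd + 1)) / 2 := by
            have h3 : Mbd + Cbd + 1 ≠ 0 := by positivity
            rw [hη]; field_simp
        _ < ε * 1 / 2 := by gcongr
        _ = ε / 2 := by ring
    have h2 : δ * K = ε / 2 := by
      rw [hδ]; field_simp
    calc ‖∫ x, f n x ∂(ν n) - ∫ x, flim x ∂(ν n)‖
        ≤ ∫ x, |f n x - flim x| ∂(ν n) := habs
      _ = (∫ x in B, |f n x - flim x| ∂(ν n)) + ∫ x in Bᶜ, |f n x - flim x| ∂(ν n) := hsplit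
      _ ≤ δ * K + (Mbd + Cbd) * η := add_le_add hB_bound hBc_bound
      _ < ε / 2 + ε / 2 := by
          exact add_lt_add_of_le_of_lt h2.le h1
      _ = ε := add_halves ε
  have := key.add hflimB
  simpa using this
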